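/- arXiv:2103.08417 — 2 statements merged into one kernel-verified Lean document; each statement's English description precedes it below -/
import Mathlib

section
/- Let H : ℝ^{N×F} → ℝ^{N×G} be a graph filter Y = ∑_{k=0}^K S^k X H_k over a support matrix S ∈ ℝ^{N×N} with filter taps H_k ∈ ℝ^{F×G}. Writing H_{fg}(S) = ∑_{k=0}^K [H_k]_{fg} S^k, if C ≥ 0 satisfies ∑_{g=1}^G ‖H_{fg}(S)‖₂ ≤ C for every f ∈ {1,…,F}, then for every X ∈ ℝ^{N×F}, ‖H(X)‖ ≤ C·‖X‖, where ‖·‖ is the L_{2,1} graph-signal norm (sum of Euclidean column norms). -/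
/-- The `L_{2,1}` graph-signal norm: sum of Euclidean norms of the columns. -/
noncomputable def l21 {N F : ℕ} (X : Matrix (Fin N) (Fin F) ℝ) : ℝ :=
  ∑ f : Fin F, Real.sqrt (∑ i : Fin N, (X i f) ^ 2)

/-- The spectral norm (operator norm induced by the Euclidean norm). -/
noncomputable def specNorm {N M : ℕ} (A : Matrix (Fin N) (Fin M) ℝ) : ℝ :=
  ‖LinearMap.toContinuousLinearMap (Matrix.toEuclideanLin A)‖

/-- The Euclidean norm of a vector, viewed through `WithLp`. -/
noncomputable def en {N : ℕ} (v : Fin N → ℝ) : ℝ :=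
  ‖(WithLp.equiv 2 (Fin N → ℝ)).symm v‖

lemma en_eq {N : ℕ} (v : Fin N → ℝ) :
    Real.sqrt (∑ i : Fin N, (v i) ^ 2) = en v := by
  rw [en, EuclideanSpace.norm_eq]
  simp [sq_abs]

lemma en_mulVec_le {N M : ℕ} (A : Matrix (Fin N) (Fin M) ℝ) (v : Fin M → ℝ) :
    en (A.mulVec v) ≤ specNorm A * en v := by
  have := (LinearMap.toContinuousLinearMap (Matrix.toEuclideanLin A)).le_opNorm
    ((WithLp.equiv 2 (Fin M → ℝ)).symm v)
  simpa [en, specNorm, Matrix.toEuclideanLin_apply_piLp_toLp] using this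

lemma en_sum_le {N : ℕ} {ι : Type*} (s : Finset ι) (w : ι → Fin N → ℝ) :
    en (∑ i ∈ s, w i) ≤ ∑ i ∈ s, en (w i) := by
  simpa [en] using norm_sum_le (E := EuclideanSpace ℝ (Fin N)) s
    (fun i => (WithLp.equiv 2 (Fin N → ℝ)).symm (w i))

/-- Lemma 1 (Bound on graph filter output): for the filter `Y = ∑_k S^k X H_k`, if
`∑_g ‖H_{fg}(S)‖₂ ≤ C` for every `f`, where `H_{fg}(S) = ∑_k [H_k]_{fg} S^k`, then
`‖H(X)‖ ≤ C ‖X‖` in the `L_{2,1}` norm. -/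
theorem stmt10 {N F G K : ℕ} (S : Matrix (Fin N) (Fin N) ℝ)
    (H : ℕ → Matrix (Fin F) (Fin G) ℝ) (C : ℝ) (hC : 0 ≤ C)
    (hbound : ∀ f : Fin F,
      ∑ g : Fin G, specNorm (∑ k ∈ Finset.range (K + 1), H k f g • S ^ k) ≤ C) :
    ∀ X : Matrix (Fin N) (Fin F) ℝ,
      l21 (∑ k ∈ Finset.range (K + 1), S ^ k * X * H k) ≤ C * l21 X := by
  intro X
  set Y : Matrix (Fin N) (Fin G) ℝ := ∑ k ∈ Finset.range (K + 1), S ^ k * X * H k with hY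
  -- column decomposition: each column of `Y` is `∑_f H_{fg}(S) x^f`
  have hcol : ∀ g : Fin G, (fun i => Y i g) =
      ∑ f : Fin F, (∑ k ∈ Finset.range (K + 1), H k f g • S ^ k).mulVec (fun i => X i f) := by
    intro g
    funext i
    simp only [hY, Finset.sum_apply, Matrix.sum_apply, Matrix.mul_apply, Matrix.mulVec,
      Matrix.smul_apply, dotProduct, Finset.sum_mul, Finset.mul_sum, smul_eq_mul]
    rw [Finset.sum_comm]
    refine Finset.sum_congr rfl fun f _ => ?_
    rw [Finset.sum_comm]
    exact Finset.sum_congr rfl fun j _ => Finset.sum_congr rfl fun k _ => by ring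
  have key : ∀ g : Fin G, en (fun i => Y i g) ≤
      ∑ f : Fin F, specNorm (∑ k ∈ Finset.range (K + 1), H k f g • S ^ k) * en (fun i => X i f) := by
    intro g
    rw [hcol g]
    refine (en_sum_le _ _).trans ?_
    exact Finset.sum_le_sum fun f _ => en_mulVec_le _ _
  calc l21 Y = ∑ g : Fin G, en (fun i => Y i g) := by
        unfold l21; exact Finset.sum_congr rfl fun g _ => en_eq _
    _ ≤ ∑ g : Fin G, ∑ f : Fin F,
          specNorm (∑ k ∈ Finset.range (K + 1), H k f g • S ^ k) * en (fun i => X i f) :=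
        Finset.sum_le_sum fun g _ => key g
    _ = ∑ f : Fin F, (∑ g : Fin G,
          specNorm (∑ k ∈ Finset.range (K + 1), H k f g • S ^ k)) * en (fun i => X i f) := by
        rw [Finset.sum_comm]
        exact Finset.sum_congr rfl fun f _ => (Finset.sum_mul _ _ _).symm
    _ ≤ ∑ f : Fin F, C * en (fun i => X i f) := by
        refine Finset.sum_le_sum fun f _ => mul_le_mul_of_nonneg_right (hbound f) ?_
        exact norm_nonneg _
    _ = C * l21 X := by
        rw [← Finset.mul_sum]
        congr 1
        unfold l21
        exact Finset.sum_congr rfl fun f _ => (en_eq _).symm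
end

section
/- Consider the closed-loop system X(t+1) = A X(t) Ā + B(Φ(X(t)) + E(t))B̄, where Φ satisfies ‖Φ(Z)‖ ≤ C_Φ‖Z‖ for all Z. If ξ := ‖A‖₂‖Ā‖_∞ + C_Φ‖B‖₂‖B̄‖_∞ < 1 and ∑_{t=0}^∞ ‖E(t)‖ < ∞, then ∑_{t=0}^∞ ‖X(t)‖ ≤ ‖X(0)‖/(1−ξ) + (‖B‖₂‖B̄‖_∞/(1−ξ))·∑_{t=0}^∞ ‖E(t)‖. In particular, the closed-loop system is input-state stable. -/
/-- The max-absolute-row-sum operator norm. -/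
noncomputable def rowSumNorm {F G : ℕ} (A : Matrix (Fin F) (Fin G) ℝ) : ℝ :=
  ⨆ f : Fin F, ∑ g : Fin G, |A f g|

set_option linter.unusedVariables false

noncomputable def cnorm {N : ℕ} (v : Fin N → ℝ) : ℝ := Real.sqrt (∑ i, v i ^ 2)

lemma cnorm_eq {N : ℕ} (v : Fin N → ℝ) :
    cnorm v = ‖(WithLp.equiv 2 (Fin N → ℝ)).symm v‖ := by
  rw [EuclideanSpace.norm_eq]
  simp [cnorm, Real.norm_eq_abs, sq_abs]

lemma cnorm_nonneg {N : ℕ} (v : Fin N → ℝ) : 0 ≤ cnorm v := Real.sqrt_nonneg _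

lemma l21_eq {N F : ℕ} (X : Matrix (Fin N) (Fin F) ℝ) :
    l21 X = ∑ f : Fin F, cnorm (fun i => X i f) := rfl

lemma cnorm_mulVec {N M : ℕ} (A : Matrix (Fin N) (Fin M) ℝ) (v : Fin M → ℝ) :
    cnorm (A.mulVec v) ≤ specNorm A * cnorm v := by
  rw [cnorm_eq, cnorm_eq]
  have h := (LinearMap.toContinuousLinearMap (Matrix.toEuclideanLin A)).le_opNorm
    ((WithLp.equiv 2 (Fin M → ℝ)).symm v)
  simpa [specNorm, Matrix.toEuclideanLin_apply] using h

lemma cnorm_add {N : ℕ} (u v : Fin N → ℝ) : cnorm (u + v) ≤ cnorm u + cnorm v := by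
  simp only [cnorm_eq]
  rw [show (WithLp.equiv 2 (Fin N → ℝ)).symm (u + v)
      = (WithLp.equiv 2 (Fin N → ℝ)).symm u + (WithLp.equiv 2 (Fin N → ℝ)).symm v from rfl]
  exact norm_add_le _ _

lemma rowSumNorm_nonneg {F G : ℕ} (A : Matrix (Fin F) (Fin G) ℝ) : 0 ≤ rowSumNorm A :=
  Real.iSup_nonneg fun f => Finset.sum_nonneg fun g _ => abs_nonneg _

lemma rowSum_le {F G : ℕ} (A : Matrix (Fin F) (Fin G) ℝ) (f : Fin F) :
    ∑ g : Fin G, |A f g| ≤ rowSumNorm A :=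
  le_ciSup (f := fun f : Fin F => ∑ g : Fin G, |A f g|) (Set.Finite.bddAbove (Set.finite_range _)) f

lemma cnorm_mulRight {N F G : ℕ} (Z : Matrix (Fin N) (Fin F) ℝ)
    (Ab : Matrix (Fin F) (Fin G) ℝ) (g : Fin G) :
    cnorm (fun i => (Z * Ab) i g) ≤ ∑ f : Fin F, |Ab f g| * cnorm (fun i => Z i f) := by
  have hcol : (fun i => (Z * Ab) i g)
      = ∑ f : Fin F, (Ab f g) • (fun i => Z i f) := by
    funext i
    simp [Matrix.mul_apply, Finset.sum_apply, mul_comm]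
  rw [hcol]
  simp only [cnorm_eq]
  have : (WithLp.equiv 2 (Fin N → ℝ)).symm (∑ f : Fin F, (Ab f g) • (fun i => Z i f))
      = ∑ f : Fin F, (Ab f g) • (WithLp.equiv 2 (Fin N → ℝ)).symm (fun i => Z i f) := by
    ext i; simp [Finset.sum_apply]
  rw [this]
  calc ‖∑ f : Fin F, (Ab f g) • (WithLp.equiv 2 (Fin N → ℝ)).symm (fun i => Z i f)‖
      ≤ ∑ f : Fin F, ‖(Ab f g) • (WithLp.equiv 2 (Fin N → ℝ)).symm (fun i => Z i f)‖ :=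
        norm_sum_le _ _
    _ = ∑ f : Fin F, |Ab f g| * ‖(WithLp.equiv 2 (Fin N → ℝ)).symm (fun i => Z i f)‖ := by
        simp [norm_smul, Real.norm_eq_abs]

lemma l21_sandwich {N F G : ℕ} (A : Matrix (Fin N) (Fin N) ℝ)
    (Z : Matrix (Fin N) (Fin F) ℝ) (Ab : Matrix (Fin F) (Fin G) ℝ) :
    l21 (A * Z * Ab) ≤ specNorm A * rowSumNorm Ab * l21 Z := by
  have h1 : ∀ g : Fin G, cnorm (fun i => (A * Z * Ab) i g)
      ≤ specNorm A * cnorm (fun i => (Z * Ab) i g) := by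
    intro g
    have : (fun i => (A * (Z * Ab)) i g) = A.mulVec (fun i => (Z * Ab) i g) := by
      funext i; simp [Matrix.mul_apply, Matrix.mulVec]
      rfl
    rw [Matrix.mul_assoc, this]
    exact cnorm_mulVec _ _
  calc l21 (A * Z * Ab) = ∑ g : Fin G, cnorm (fun i => (A * Z * Ab) i g) := rfl
    _ ≤ ∑ g : Fin G, specNorm A * cnorm (fun i => (Z * Ab) i g) :=
        Finset.sum_le_sum fun g _ => h1 g
    _ ≤ ∑ g : Fin G, specNorm A * ∑ f : Fin F, |Ab f g| * cnorm (fun i => Z i f) := by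
        refine Finset.sum_le_sum fun g _ => ?_
        exact mul_le_mul_of_nonneg_left (cnorm_mulRight Z Ab g) (norm_nonneg _)
    _ = specNorm A * ∑ f : Fin F, (∑ g : Fin G, |Ab f g|) * cnorm (fun i => Z i f) := by
        rw [← Finset.mul_sum, Finset.sum_comm]
        simp [Finset.sum_mul]
    _ ≤ specNorm A * ∑ f : Fin F, rowSumNorm Ab * cnorm (fun i => Z i f) := by
        refine mul_le_mul_of_nonneg_left (Finset.sum_le_sum fun f _ => ?_) (norm_nonneg _)
        exact mul_le_mul_of_nonneg_right (rowSum_le Ab f) (cnorm_nonneg _)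
    _ = specNorm A * rowSumNorm Ab * l21 Z := by
        rw [← Finset.mul_sum, l21_eq, mul_assoc]

lemma l21_nonneg {N F : ℕ} (X : Matrix (Fin N) (Fin F) ℝ) : 0 ≤ l21 X :=
  Finset.sum_nonneg fun f _ => Real.sqrt_nonneg _

lemma l21_add {N F : ℕ} (X Y : Matrix (Fin N) (Fin F) ℝ) : l21 (X + Y) ≤ l21 X + l21 Y := by
  simp only [l21]
  rw [← Finset.sum_add_distrib]
  refine Finset.sum_le_sum fun f _ => ?_
  have := cnorm_add (fun i => X i f) (fun i => Y i f)
  simpa [cnorm] using this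

lemma geo_rec {a e : ℕ → ℝ} {ξ β : ℝ} (ha : ∀ t, 0 ≤ a t) (hξ1 : ξ < 1) (hξ0 : 0 ≤ ξ)
    (hβ : 0 ≤ β) (he : ∀ t, 0 ≤ e t)
    (hrec : ∀ t, a (t + 1) ≤ ξ * a t + β * e t) (hE : Summable e) :
    Summable a ∧ ∑' t, a t ≤ a 0 / (1 - ξ) + β / (1 - ξ) * ∑' t, e t := by
  set T := ∑' t, e t with hT
  have hTn : 0 ≤ T := tsum_nonneg he
  have h1ξ : 0 < 1 - ξ := by linarith
  have key : ∀ n, ∑ t ∈ Finset.range n, a t ≤ (a 0 + β * T) / (1 - ξ) := by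
    intro n
    have hmono : ∑ t ∈ Finset.range n, a t ≤ ∑ t ∈ Finset.range (n + 1), a t := by
      rw [Finset.sum_range_succ]; linarith [ha n]
    have hsucc : ∑ t ∈ Finset.range (n + 1), a t
        ≤ a 0 + ξ * ∑ t ∈ Finset.range n, a t + β * T := by
      rw [Finset.sum_range_succ']
      have h1 : ∑ t ∈ Finset.range n, a (t + 1)
          ≤ ∑ t ∈ Finset.range n, (ξ * a t + β * e t) :=
        Finset.sum_le_sum fun t _ => hrec t
      have h2 : ∑ t ∈ Finset.range n, e t ≤ T :=
        Summable.sum_le_tsum _ (fun t _ => he t) hE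
      have h3 : ∑ t ∈ Finset.range n, (ξ * a t + β * e t)
          = ξ * ∑ t ∈ Finset.range n, a t + β * ∑ t ∈ Finset.range n, e t := by
        rw [Finset.sum_add_distrib, Finset.mul_sum, Finset.mul_sum]
      nlinarith [mul_le_mul_of_nonneg_left h2 hβ]
    have : (1 - ξ) * ∑ t ∈ Finset.range n, a t ≤ a 0 + β * T := by nlinarith
    rw [le_div_iff₀ h1ξ]
    rw [mul_comm] at this
    linarith
  have hsum : Summable a := summable_of_sum_range_le ha key
  refine ⟨hsum, ?_⟩
  have := Summable.tsum_le_of_sum_range_le hsum key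
  calc ∑' t, a t ≤ (a 0 + β * T) / (1 - ξ) := this
    _ = a 0 / (1 - ξ) + β / (1 - ξ) * T := by ring

/-- Theorem 1 (Sufficient condition for input-state stability): for the closed-loop system
`X(t+1) = A X(t) Ā + B (Φ(X(t)) + E(t)) B̄` with `‖Φ(Z)‖ ≤ C_Φ ‖Z‖`, if
`ξ = ‖A‖₂‖Ā‖_∞ + C_Φ‖B‖₂‖B̄‖_∞ < 1` and `∑_t ‖E(t)‖ < ∞`, then `∑_t ‖X(t)‖` converges and
`∑_t ‖X(t)‖ ≤ ‖X(0)‖/(1−ξ) + (‖B‖₂‖B̄‖_∞/(1−ξ)) ∑_t ‖E(t)‖`. -/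
theorem stmt14 {N F G : ℕ} (A B : Matrix (Fin N) (Fin N) ℝ)
    (Ab : Matrix (Fin F) (Fin F) ℝ) (Bb : Matrix (Fin G) (Fin F) ℝ)
    (Φ : Matrix (Fin N) (Fin F) ℝ → Matrix (Fin N) (Fin G) ℝ) (CΦ : ℝ) (hCΦ : 0 ≤ CΦ)
    (hΦ : ∀ Z, l21 (Φ Z) ≤ CΦ * l21 Z)
    (X : ℕ → Matrix (Fin N) (Fin F) ℝ) (E : ℕ → Matrix (Fin N) (Fin G) ℝ)
    (hdyn : ∀ t, X (t + 1) = A * X t * Ab + B * (Φ (X t) + E t) * Bb)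
    (hξ : specNorm A * rowSumNorm Ab + CΦ * (specNorm B * rowSumNorm Bb) < 1)
    (hE : Summable fun t => l21 (E t)) :
    Summable (fun t => l21 (X t)) ∧
      ∑' t, l21 (X t)
        ≤ l21 (X 0) / (1 - (specNorm A * rowSumNorm Ab + CΦ * (specNorm B * rowSumNorm Bb)))
          + (specNorm B * rowSumNorm Bb
              / (1 - (specNorm A * rowSumNorm Ab + CΦ * (specNorm B * rowSumNorm Bb))))
            * ∑' t, l21 (E t) := by
  set α := specNorm A * rowSumNorm Ab with hα
  set β := specNorm B * rowSumNorm Bb with hβdef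
  have hα0 : 0 ≤ α := mul_nonneg (norm_nonneg _) (rowSumNorm_nonneg _)
  have hβ0 : 0 ≤ β := mul_nonneg (norm_nonneg _) (rowSumNorm_nonneg _)
  have hξ0 : 0 ≤ α + CΦ * β := by positivity
  have hrec : ∀ t, l21 (X (t + 1)) ≤ (α + CΦ * β) * l21 (X t) + β * l21 (E t) := by
    intro t
    rw [hdyn t]
    calc l21 (A * X t * Ab + B * (Φ (X t) + E t) * Bb)
        ≤ l21 (A * X t * Ab) + l21 (B * (Φ (X t) + E t) * Bb) := l21_add _ _
      _ ≤ α * l21 (X t) + β * l21 (Φ (X t) + E t) :=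
          add_le_add (l21_sandwich _ _ _) (l21_sandwich _ _ _)
      _ ≤ α * l21 (X t) + β * (CΦ * l21 (X t) + l21 (E t)) := by
          have := l21_add (Φ (X t)) (E t)
          have h2 := hΦ (X t)
          nlinarith
      _ = (α + CΦ * β) * l21 (X t) + β * l21 (E t) := by ring
  have := geo_rec (a := fun t => l21 (X t)) (e := fun t => l21 (E t))
    (fun t => l21_nonneg _) hξ hξ0 hβ0 (fun t => l21_nonneg _) hrec hE
  obtain ⟨hs, hb⟩ := this
  exact ⟨hs, by rw [div_mul_eq_mul_div] at hb ⊢; linarith⟩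
end
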